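/- Let 𝔤 be a finite-dimensional real semisimple Lie algebra with Killing form κ, U an open connected subset of a finite-dimensional real normed space, ξ : U → 𝔤 a complementary-pair configuration with parabolic bundles f, f̂ and 1-forms β, β̂, and m ∈ ℝ∖{0}; suppose η := β̂/m is closed, so that (f, β̂/m) and (f̂, β/m) form a Darboux pair with parameter m. Define the 2-tensor q on U by q_x(u, v) := (1/m)·κ(β̂_x(u), β_x(v)) (the quadratic form associated to the isothermic map (f, η)). Then: (1) q is symmetric, q_x(u, v) = q_x(v, u); (2) the quadratic form associated to (f̂, β/m), namely (u, v) ↦ (1/m)·κ(β_x(u), β̂_x(v)), equals q; (3) q_x(u, v) = (1/(2m))·κ(𝒩_x(u), 𝒩_x(v)), where 𝒩 := −β − β̂, i.e. q is 1/(2m) times the metric induced via φ = (f, f̂) from the Killing form on the space of complementary pairs. -/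

import Mathlib

open Module

/-- A Lie algebra structure on a real normed space, recorded as a bilinear bracket.
(Using a bracket carried as data avoids typeclass diamonds between the normed and
the Lie-algebraic structure.) -/
structure LieStructure (L : Type*) [NormedAddCommGroup L] [NormedSpace ℝ L] where
  bracket : L →ₗ[ℝ] L →ₗ[ℝ] L
  alternating : ∀ x : L, bracket x x = 0
  jacobi : ∀ x y z : L, bracket x (bracket y z) =
    bracket (bracket x y) z + bracket y (bracket x z)

namespace LieStructure

variable {L : Type*} [NormedAddCommGroup L] [NormedSpace ℝ L] (B : LieStructure L)

/-- The adjoint action `ad x = ⁅x, ·⁆`. -/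
def ad (x : L) : Module.End ℝ L := B.bracket x

/-- The Killing form `κ(x, y) = tr (ad x ∘ ad y)`. -/
noncomputable def killing (x y : L) : ℝ := LinearMap.trace ℝ L (B.ad x * B.ad y)

/-- Semisimplicity, via Cartan's criterion: the Killing form is nondegenerate. -/
def IsSemisimple : Prop := ∀ x : L, (∀ y : L, B.killing x y = 0) → x = 0

/-- A Lie subalgebra: a submodule closed under the bracket. -/
def IsSubalgebra (p : Submodule ℝ L) : Prop :=
  ∀ x ∈ p, ∀ y ∈ p, B.bracket x y ∈ p

/-- The Killing polar `𝔭^⊥`. -/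
noncomputable def polar (p : Submodule ℝ L) : Submodule ℝ L where
  carrier := {x | ∀ y ∈ p, B.killing x y = 0}
  add_mem' := fun {a b} ha hb y hy => by
    have : B.killing (a + b) y = B.killing a y + B.killing b y := by
      simp [killing, ad, map_add, add_mul]
    rw [this, ha y hy, hb y hy, add_zero]
  zero_mem' := fun y hy => by simp [killing, ad, map_zero, zero_mul]
  smul_mem' := fun c a ha y hy => by
    have : B.killing (c • a) y = c * B.killing a y := by
      simp [killing, ad, map_smul, smul_mul_assoc]
    rw [this, ha y hy, mul_zero]

/-- A height-one parabolic subalgebra: a subalgebra whose Killing polar is an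
abelian (hence nilpotent) subalgebra. -/
def IsH1Parabolic (p : Submodule ℝ L) : Prop :=
  B.IsSubalgebra p ∧ ∀ x ∈ B.polar p, ∀ y ∈ B.polar p, B.bracket x y = 0

/-- Complementary pair of height-one parabolic subalgebras:
`𝔤 = 𝔭 ⊕ 𝔮^⊥` and `𝔤 = 𝔮 ⊕ 𝔭^⊥`. -/
noncomputable def ComplPair (p q : Submodule ℝ L) : Prop :=
  IsCompl p (B.polar q) ∧ IsCompl q (B.polar p)

/-- `exp (ad z)`, the finite exponential series of the adjoint action (exhaustive
whenever `ad z` is nilpotent, since then `(ad z)^(dim 𝔤 + 1) = 0`). -/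
noncomputable def expAd [FiniteDimensional ℝ L] (z : L) : Module.End ℝ L :=
  ∑ k ∈ Finset.range (Module.finrank ℝ L + 1), (k.factorial : ℝ)⁻¹ • (B.ad z) ^ k

end LieStructure

namespace LieStructure

variable {L : Type*} [NormedAddCommGroup L] [NormedSpace ℝ L] (B : LieStructure L)
variable {E : Type*} [NormedAddCommGroup E] [NormedSpace ℝ E]

/-- The 1-form `β`, the `𝔤₁`-part of `dξ`: `β_x(u) = ½((ad ξ(x))² + ad ξ(x))(dξ_x(u))`. -/
noncomputable def beta [FiniteDimensional ℝ L] (ξ : E → L) (x : E) : E →L[ℝ] L :=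
  (LinearMap.toContinuousLinearMap
    ((2⁻¹ : ℝ) • ((B.ad (ξ x)) ^ 2 + B.ad (ξ x)))).comp (fderiv ℝ ξ x)

/-- The 1-form `β̂`, the `𝔤₋₁`-part of `dξ`:
`β̂_x(u) = −½((ad ξ(x))² − ad ξ(x))(dξ_x(u))`. -/
noncomputable def betaHat [FiniteDimensional ℝ L] (ξ : E → L) (x : E) : E →L[ℝ] L :=
  (LinearMap.toContinuousLinearMap
    (-((2⁻¹ : ℝ) • ((B.ad (ξ x)) ^ 2 - B.ad (ξ x))))).comp (fderiv ℝ ξ x)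

end LieStructure

namespace LieStructure

variable {L : Type*} [NormedAddCommGroup L] [NormedSpace ℝ L] (B : LieStructure L)

lemma bracket_antisymm (x y : L) : B.bracket x y = - B.bracket y x := by
  have h := B.alternating (x + y)
  simp only [map_add, LinearMap.add_apply, B.alternating] at h
  have h' : B.bracket x y + B.bracket y x = 0 := by
    linear_combination (norm := module) h
  exact eq_neg_of_add_eq_zero_left h'

lemma ad_bracket (x y : L) : B.ad (B.bracket x y) = B.ad x * B.ad y - B.ad y * B.ad x := by
  apply LinearMap.ext; intro w
  have := B.jacobi x y w
  simp only [ad, LinearMap.sub_apply, Module.End.mul_apply]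
  linear_combination (norm := module) -this

lemma killing_comm (x y : L) : B.killing x y = B.killing y x := by
  simp only [killing]; exact LinearMap.trace_mul_comm ℝ (B.ad x) (B.ad y)

lemma killing_add_left (x y z : L) :
    B.killing (x + y) z = B.killing x z + B.killing y z := by
  simp [killing, ad, map_add, add_mul]

lemma killing_add_right (x y z : L) :
    B.killing x (y + z) = B.killing x y + B.killing x z := by
  simp [killing, ad, map_add, mul_add]

lemma killing_smul_left (c : ℝ) (x z : L) :
    B.killing (c • x) z = c * B.killing x z := by
  simp [killing, ad, map_smul, smul_mul_assoc]

lemma killing_smul_right (c : ℝ) (x z : L) :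
    B.killing x (c • z) = c * B.killing x z := by
  simp [killing, ad, map_smul, mul_smul_comm]

lemma killing_neg_left (x z : L) : B.killing (-x) z = - B.killing x z := by
  simp [killing, ad, map_neg, neg_mul]

lemma killing_neg_right (x z : L) : B.killing x (-z) = - B.killing x z := by
  simp [killing, ad, map_neg, mul_neg]

lemma killing_sub_left (x y z : L) :
    B.killing (x - y) z = B.killing x z - B.killing y z := by
  simp [killing, ad, map_sub, sub_mul]

lemma killing_sub_right (x y z : L) :
    B.killing x (y - z) = B.killing x y - B.killing x z := by
  simp [killing, ad, map_sub, mul_sub]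

lemma killing_bracket_left (z x y : L) :
    B.killing (B.bracket z x) y = - B.killing x (B.bracket z y) := by
  simp only [killing, B.ad_bracket, sub_mul, mul_sub, map_sub]
  have c1 : LinearMap.trace ℝ L (B.ad z * B.ad x * B.ad y)
      = LinearMap.trace ℝ L (B.ad x * (B.ad y * B.ad z)) := by
    rw [mul_assoc, LinearMap.trace_mul_comm, mul_assoc]
  have c2 : B.ad x * B.ad z * B.ad y = B.ad x * (B.ad z * B.ad y) := mul_assoc _ _ _
  rw [c1, c2]; ring

lemma killing_z_bracket (z x y : L) :
    B.killing z (B.bracket x y) = B.killing (B.bracket z x) y := by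
  have h := B.killing_bracket_left x z y
  have h2 : B.bracket x z = - B.bracket z x := B.bracket_antisymm x z
  rw [h2, killing_neg_left] at h
  linarith [h]

/-- The core consequence of closedness: `κ([z,a],b) = 0`. -/
lemma core_vanish (z a b : L)
    (hsym : B.bracket a (B.bracket z b) + B.bracket z (B.bracket a b) - B.bracket a b
        = B.bracket b (B.bracket z a) + B.bracket z (B.bracket b a) - B.bracket b a) :
    B.killing (B.bracket z a) b = 0 := by
  have hj : B.bracket z (B.bracket a b)
      = B.bracket (B.bracket z a) b + B.bracket a (B.bracket z b) := B.jacobi z a b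
  have hba : B.bracket b a = - B.bracket a b := B.bracket_antisymm b a
  have hzba : B.bracket z (B.bracket b a) = - B.bracket z (B.bracket a b) := by
    rw [hba, map_neg]
  have hbza : B.bracket b (B.bracket z a) = - B.bracket (B.bracket z a) b :=
    B.bracket_antisymm b (B.bracket z a)
  -- 3([a,[z,b]] + [[z,a],b]) = 2[a,b]
  have key : (3:ℝ) • (B.bracket a (B.bracket z b) + B.bracket (B.bracket z a) b)
      = (2:ℝ) • B.bracket a b := by
    rw [hzba, hbza, hba] at hsym
    rw [hj] at hsym
    linear_combination (norm := module) hsym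
  have hk := congrArg (fun w => B.killing z w) key
  simp only [killing_smul_right, killing_add_right] at hk
  have e1 : B.killing z (B.bracket a (B.bracket z b))
      = B.killing (B.bracket z a) (B.bracket z b) := B.killing_z_bracket z a (B.bracket z b)
  have e2 : B.killing z (B.bracket (B.bracket z a) b)
      = B.killing (B.bracket z (B.bracket z a)) b := B.killing_z_bracket z (B.bracket z a) b
  have e3 : B.killing z (B.bracket a b) = B.killing (B.bracket z a) b :=
    B.killing_z_bracket z a b
  have e4 : B.killing (B.bracket z (B.bracket z a)) b
      = - B.killing (B.bracket z a) (B.bracket z b) := B.killing_bracket_left z (B.bracket z a) b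
  rw [e1, e2, e3, e4] at hk
  linarith [hk]

end LieStructure

namespace LieStructure

variable {L : Type*} [NormedAddCommGroup L] [NormedSpace ℝ L] (B : LieStructure L)

section kappa

variable (z a b : L)

lemma kappa_f1 (h3 : ∀ w, B.bracket z (B.bracket z (B.bracket z w)) = B.bracket z w)
    (hba : B.killing (B.bracket z b) a = 0) :
    B.killing (B.bracket z a) (B.bracket z (B.bracket z b)) = 0 := by
  rw [B.killing_bracket_left z a (B.bracket z (B.bracket z b)), h3 b,
    B.killing_comm a (B.bracket z b), hba, neg_zero]

lemma kappa_f3 (h3 : ∀ w, B.bracket z (B.bracket z (B.bracket z w)) = B.bracket z w) :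
    B.killing (B.bracket z (B.bracket z a)) (B.bracket z (B.bracket z b))
      = - B.killing (B.bracket z a) (B.bracket z b) := by
  rw [B.killing_bracket_left z (B.bracket z a) (B.bracket z (B.bracket z b)), h3 b]

end kappa

variable {E : Type*} [NormedAddCommGroup E] [NormedSpace ℝ E]

lemma beta_apply [FiniteDimensional ℝ L] (ξ : E → L) (x : E) (u : E) :
    B.beta ξ x u = (2⁻¹:ℝ) • (B.bracket (ξ x) (B.bracket (ξ x) (fderiv ℝ ξ x u))
      + B.bracket (ξ x) (fderiv ℝ ξ x u)) := by
  simp [beta, ad, pow_succ, Module.End.mul_apply]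

lemma betaHat_apply [FiniteDimensional ℝ L] (ξ : E → L) (x : E) (u : E) :
    B.betaHat ξ x u = (-(2⁻¹:ℝ)) • (B.bracket (ξ x) (B.bracket (ξ x) (fderiv ℝ ξ x u))
      - B.bracket (ξ x) (fderiv ℝ ξ x u)) := by
  simp [betaHat, ad, pow_succ, Module.End.mul_apply, smul_sub]; abel

/-- The bracket as a continuous bilinear map. -/
noncomputable def brCL [FiniteDimensional ℝ L] : L →L[ℝ] L →L[ℝ] L :=
  LinearMap.toContinuousLinearMap
    ((LinearMap.toContinuousLinearMap :
        (L →ₗ[ℝ] L) ≃ₗ[ℝ] (L →L[ℝ] L)).toLinearMap ∘ₗ B.bracket)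

@[simp] lemma brCL_apply [FiniteDimensional ℝ L] (z w : L) :
    B.brCL z w = B.bracket z w := by
  simp [brCL]

end LieStructure

namespace LieStructure

variable {L : Type*} [NormedAddCommGroup L] [NormedSpace ℝ L] (B : LieStructure L)
variable {E : Type*} [NormedAddCommGroup E] [NormedSpace ℝ E]

/-- Explicit formula for the derivative of `y ↦ β̂_y(v)` in direction `u`. -/
lemma betaHat_fderiv_apply [FiniteDimensional ℝ L]
    (U : Set E) (hU : IsOpen U) (ξ : E → L) (hξ : ContDiffOn ℝ (⊤ : ℕ∞) ξ U)
    (x : E) (hx : x ∈ U) (u v : E) :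
    fderiv ℝ (fun y => B.betaHat ξ y v) x u
      = (-(2⁻¹:ℝ)) • (
          B.bracket (ξ x) (B.bracket (ξ x) (fderiv ℝ (fderiv ℝ ξ) x u v))
          + B.bracket (ξ x) (B.bracket (fderiv ℝ ξ x u) (fderiv ℝ ξ x v))
          + B.bracket (fderiv ℝ ξ x u) (B.bracket (ξ x) (fderiv ℝ ξ x v))
          - (B.bracket (ξ x) (fderiv ℝ (fderiv ℝ ξ) x u v)
            + B.bracket (fderiv ℝ ξ x u) (fderiv ℝ ξ x v))) := by
  have hξx : ContDiffAt ℝ (⊤ : ℕ∞) ξ x := hξ.contDiffAt (hU.mem_nhds hx)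
  have hξd : DifferentiableAt ℝ ξ x := hξx.differentiableAt (by simp)
  have hFC : ContDiffAt ℝ (⊤ : ℕ∞) (fderiv ℝ ξ) x := hξx.fderiv_right (by exact_mod_cast le_top)
  have hFd : DifferentiableAt ℝ (fderiv ℝ ξ) x := hFC.differentiableAt (by simp)
  have hg1 : HasFDerivAt (fun y => fderiv ℝ ξ y v)
      ((fderiv ℝ (fderiv ℝ ξ) x).flip v) x := by
    have h := hFd.hasFDerivAt.clm_apply (hasFDerivAt_const v x)
    simpa using h
  have hc : HasFDerivAt (fun y => B.brCL (ξ y))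
      ((B.brCL).comp (fderiv ℝ ξ x)) x :=
    (B.brCL.hasFDerivAt).comp x hξd.hasFDerivAt
  have hg2 := hc.clm_apply hg1
  have hg3 := hc.clm_apply hg2
  have hg4 := (hg3.sub hg2).const_smul (-(2⁻¹:ℝ))
  have hfun : (fun y => B.betaHat ξ y v)
      = (fun y => (-(2⁻¹:ℝ)) • (B.brCL (ξ y) (B.brCL (ξ y) (fderiv ℝ ξ y v))
          - B.brCL (ξ y) (fderiv ℝ ξ y v))) := by
    funext y
    rw [B.betaHat_apply]
    simp
  rw [hfun]
  have hg4' : HasFDerivAt (fun y => (-(2⁻¹:ℝ)) • (B.brCL (ξ y) (B.brCL (ξ y) (fderiv ℝ ξ y v))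
      - B.brCL (ξ y) (fderiv ℝ ξ y v))) _ x := hg4
  rw [hg4'.fderiv]
  simp only [ContinuousLinearMap.smul_apply, ContinuousLinearMap.sub_apply,
    ContinuousLinearMap.add_apply, ContinuousLinearMap.comp_apply,
    ContinuousLinearMap.flip_apply, brCL_apply, map_add]
  try congr 1
  try abel

/-- Pointwise consequence of closedness of `β̂/m`. -/
lemma closed_pointwise [FiniteDimensional ℝ L] [FiniteDimensional ℝ E]
    (U : Set E) (hU : IsOpen U) (ξ : E → L) (hξ : ContDiffOn ℝ (⊤ : ℕ∞) ξ U)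
    (m : ℝ) (hm : m ≠ 0)
    (hclosed : ∀ x ∈ U, ∀ u v : E,
      fderiv ℝ (fun y => m⁻¹ • B.betaHat ξ y) x u v =
      fderiv ℝ (fun y => m⁻¹ • B.betaHat ξ y) x v u)
    (x : E) (hx : x ∈ U) (u v : E) :
    B.bracket (fderiv ℝ ξ x u) (B.bracket (ξ x) (fderiv ℝ ξ x v))
      + B.bracket (ξ x) (B.bracket (fderiv ℝ ξ x u) (fderiv ℝ ξ x v))
      - B.bracket (fderiv ℝ ξ x u) (fderiv ℝ ξ x v)
    = B.bracket (fderiv ℝ ξ x v) (B.bracket (ξ x) (fderiv ℝ ξ x u))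
      + B.bracket (ξ x) (B.bracket (fderiv ℝ ξ x v) (fderiv ℝ ξ x u))
      - B.bracket (fderiv ℝ ξ x v) (fderiv ℝ ξ x u) := by
  have hξx : ContDiffAt ℝ (⊤ : ℕ∞) ξ x := hξ.contDiffAt (hU.mem_nhds hx)
  have hξd : DifferentiableAt ℝ ξ x := hξx.differentiableAt (by simp)
  have hFC : ContDiffAt ℝ (⊤ : ℕ∞) (fderiv ℝ ξ) x := hξx.fderiv_right (by exact_mod_cast le_top)
  have hFd : DifferentiableAt ℝ (fderiv ℝ ξ) x := hFC.differentiableAt (by simp)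
  have hc : HasFDerivAt (fun y => B.brCL (ξ y))
      ((B.brCL).comp (fderiv ℝ ξ x)) x :=
    (B.brCL.hasFDerivAt).comp x hξd.hasFDerivAt
  have hcdiff : DifferentiableAt ℝ (fun y => B.brCL (ξ y)) x := hc.differentiableAt
  -- differentiability of the clm-valued 1-form `β̂`
  have hfun2 : (fun y => B.betaHat ξ y)
      = (fun y => ((-(2⁻¹:ℝ)) • ((B.brCL (ξ y)).comp (B.brCL (ξ y)) - B.brCL (ξ y))).comp
          (fderiv ℝ ξ y)) := by
    funext y
    apply ContinuousLinearMap.ext; intro w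
    rw [B.betaHat_apply]
    simp
  have hBH : DifferentiableAt ℝ (fun y => B.betaHat ξ y) x := by
    rw [hfun2]
    exact (((hcdiff.clm_comp hcdiff).sub hcdiff).const_smul (-(2⁻¹:ℝ))).clm_comp hFd
  -- reduce the closedness hypothesis to the applied form
  have happ : ∀ u' v' : E, fderiv ℝ (fun y => m⁻¹ • B.betaHat ξ y) x u' v'
      = m⁻¹ • fderiv ℝ (fun y => B.betaHat ξ y v') x u' := by
    intro u' v'
    rw [fderiv_fun_const_smul hBH m⁻¹]
    rw [fderiv_clm_apply hBH (differentiableAt_const v')]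
    simp
  have hcl := hclosed x hx u v
  rw [happ u v, happ v u] at hcl
  have hcl' : fderiv ℝ (fun y => B.betaHat ξ y v) x u
      = fderiv ℝ (fun y => B.betaHat ξ y u) x v :=
    smul_right_injective L (inv_ne_zero hm) hcl
  rw [B.betaHat_fderiv_apply U hU ξ hξ x hx u v,
    B.betaHat_fderiv_apply U hU ξ hξ x hx v u] at hcl'
  -- symmetry of the second derivative
  have hev : ∀ᶠ y in nhds x, HasFDerivAt ξ (fderiv ℝ ξ y) y := by
    filter_upwards [hU.mem_nhds hx] with y hy
    exact ((hξ.contDiffAt (hU.mem_nhds hy)).differentiableAt (by simp)).hasFDerivAt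
  have hsecond : fderiv ℝ (fderiv ℝ ξ) x u v = fderiv ℝ (fderiv ℝ ξ) x v u :=
    second_derivative_symmetric_of_eventually hev hFd.hasFDerivAt u v
  rw [hsecond] at hcl'
  have hcl'' := smul_right_injective L (by norm_num : (-(2⁻¹:ℝ)) ≠ 0) hcl'
  linear_combination (norm := module) hcl''

end LieStructure


open LieStructure

/-- **The quadratic form of a Darboux pair.**  With `q_x(u,v) := (1/m)·κ(β̂_x(u), β_x(v))`
the quadratic form of the isothermic map `(f, η = β̂/m)`: (1) `q` is symmetric;
(2) the quadratic form `(u,v) ↦ (1/m)·κ(β_x(u), β̂_x(v))` of `(f̂, β/m)` equals `q`;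
(3) `q = (1/2m)·φ*g_Z`, i.e. `q_x(u,v) = (1/2m)·κ(𝒩_x(u), 𝒩_x(v))` for `𝒩 = −β − β̂`. -/
theorem darboux_pair_quadratic_form
    {L : Type*} [NormedAddCommGroup L] [NormedSpace ℝ L] [FiniteDimensional ℝ L]
    (B : LieStructure L) (hss : B.IsSemisimple)
    {E : Type*} [NormedAddCommGroup E] [NormedSpace ℝ E] [FiniteDimensional ℝ E]
    (U : Set E) (hU : IsOpen U) (hUconn : IsConnected U)
    (ξ : E → L) (hξ : ContDiffOn ℝ (⊤ : ℕ∞) ξ U)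
    (hconf : ∀ x ∈ U, (B.ad (ξ x)) ^ 3 = B.ad (ξ x))
    (m : ℝ) (hm : m ≠ 0)
    -- `η := β̂/m` is closed, so `(f, β̂/m)` and `(f̂, β/m)` form a Darboux pair
    (hclosed : ∀ x ∈ U, ∀ u v : E,
      fderiv ℝ (fun y => m⁻¹ • B.betaHat ξ y) x u v =
      fderiv ℝ (fun y => m⁻¹ • B.betaHat ξ y) x v u) :
    -- (1) symmetry
    (∀ x ∈ U, ∀ u v : E,
      m⁻¹ * B.killing (B.betaHat ξ x u) (B.beta ξ x v) =
      m⁻¹ * B.killing (B.betaHat ξ x v) (B.beta ξ x u)) ∧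
    -- (2) the quadratic form of `(f̂, β/m)` is the same
    (∀ x ∈ U, ∀ u v : E,
      m⁻¹ * B.killing (B.beta ξ x u) (B.betaHat ξ x v) =
      m⁻¹ * B.killing (B.betaHat ξ x u) (B.beta ξ x v)) ∧
    -- (3) `q` is `1/(2m)` times the metric induced from the Killing form of `Z`
    (∀ x ∈ U, ∀ u v : E,
      m⁻¹ * B.killing (B.betaHat ξ x u) (B.beta ξ x v) =
      (2 * m)⁻¹ * B.killing (-(B.beta ξ x u) - B.betaHat ξ x u)
        (-(B.beta ξ x v) - B.betaHat ξ x v)) := by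
  -- the pointwise ingredients
  have setup : ∀ x ∈ U, ∀ u v : E,
      (B.killing (B.betaHat ξ x u) (B.beta ξ x v) =
        2⁻¹ * B.killing (B.bracket (ξ x) (fderiv ℝ ξ x u)) (B.bracket (ξ x) (fderiv ℝ ξ x v))) ∧
      (B.killing (B.beta ξ x u) (B.betaHat ξ x v) =
        2⁻¹ * B.killing (B.bracket (ξ x) (fderiv ℝ ξ x u)) (B.bracket (ξ x) (fderiv ℝ ξ x v))) ∧
      (B.killing (B.beta ξ x u) (B.beta ξ x v) = 0) ∧
      (B.killing (B.betaHat ξ x u) (B.betaHat ξ x v) = 0) := by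
    intro x hx u v
    have h3 : ∀ w, B.bracket (ξ x) (B.bracket (ξ x) (B.bracket (ξ x) w)) = B.bracket (ξ x) w := by
      intro w
      have h := LinearMap.congr_fun (hconf x hx) w
      simpa [ad, pow_succ, Module.End.mul_apply] using h
    have hab : B.killing (B.bracket (ξ x) (fderiv ℝ ξ x u)) (fderiv ℝ ξ x v) = 0 :=
      B.core_vanish (ξ x) _ _ (B.closed_pointwise U hU ξ hξ m hm hclosed x hx u v)
    have hba : B.killing (B.bracket (ξ x) (fderiv ℝ ξ x v)) (fderiv ℝ ξ x u) = 0 :=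
      B.core_vanish (ξ x) _ _ (B.closed_pointwise U hU ξ hξ m hm hclosed x hx v u)
    have f1 := B.kappa_f1 (ξ x) (fderiv ℝ ξ x u) (fderiv ℝ ξ x v) h3 hba
    have f1s := B.kappa_f1 (ξ x) (fderiv ℝ ξ x v) (fderiv ℝ ξ x u) h3 hab
    have f2 : B.killing (B.bracket (ξ x) (B.bracket (ξ x) (fderiv ℝ ξ x u)))
        (B.bracket (ξ x) (fderiv ℝ ξ x v)) = 0 := by
      rw [B.killing_comm]; exact f1s
    have f2s : B.killing (B.bracket (ξ x) (B.bracket (ξ x) (fderiv ℝ ξ x v)))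
        (B.bracket (ξ x) (fderiv ℝ ξ x u)) = 0 := by
      rw [B.killing_comm]; exact f1
    have f3 := B.kappa_f3 (ξ x) (fderiv ℝ ξ x u) (fderiv ℝ ξ x v) h3
    refine ⟨?_, ?_, ?_, ?_⟩ <;>
    · simp only [B.beta_apply, B.betaHat_apply, killing_smul_left, killing_smul_right,
        killing_add_left, killing_add_right, killing_sub_left, killing_sub_right,
        killing_neg_left, killing_neg_right, f1, f2, f1s, f2s, f3]
      ring
  refine ⟨?_, ?_, ?_⟩
  · intro x hx u v
    rw [(setup x hx u v).1, (setup x hx v u).1,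
      B.killing_comm (B.bracket (ξ x) (fderiv ℝ ξ x u)) (B.bracket (ξ x) (fderiv ℝ ξ x v))]
  · intro x hx u v
    rw [(setup x hx u v).2.1, (setup x hx u v).1]
  · intro x hx u v
    obtain ⟨s1, s2, s3, s4⟩ := setup x hx u v
    have expand : B.killing (-(B.beta ξ x u) - B.betaHat ξ x u)
        (-(B.beta ξ x v) - B.betaHat ξ x v)
      = B.killing (B.beta ξ x u) (B.beta ξ x v)
        + B.killing (B.beta ξ x u) (B.betaHat ξ x v)
        + B.killing (B.betaHat ξ x u) (B.beta ξ x v)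
        + B.killing (B.betaHat ξ x u) (B.betaHat ξ x v) := by
      simp only [killing_sub_left, killing_sub_right, killing_neg_left, killing_neg_right]
      ring
    rw [expand, s1, s2, s3, s4]
    ring
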